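/- Let G = ℝ be the additive group of real numbers with Lebesgue measure, let 1 ≤ p < ∞, let g < 0 be a fixed negative real number, and let 1 < s < t be real numbers. Define the weight w : ℝ → (0,∞) by w(x) = t for x ≥ 1, w(x) = −x/2 + 1 for −1 < x < 1, and w(x) = s for x ≤ −1. Then the weighted translation operator T_{g,w} on L^p(ℝ), given by (T_{g,w} f)(x) = w(x) f(x − g), is convex-cyclic. -/

import Mathlib

open MeasureTheory Filter
open scoped ENNReal

private lemma prod_bound_lower {t : ℝ} (ht : 1 ≤ t) {v : ℕ → ℝ}
    (hlb : ∀ k, (1:ℝ)/2 ≤ v k) {K : ℕ} (hgood : ∀ k, K ≤ k → t ≤ v k) (n : ℕ) :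
    (1/2 : ℝ)^K * t^(n - K) ≤ ∏ k ∈ Finset.range n, v k := by
  have h2 : ∏ k ∈ Finset.range n, (if K ≤ k then t else (1:ℝ)/2) ≤ ∏ k ∈ Finset.range n, v k := by
    refine Finset.prod_le_prod (fun k _ => ?_) (fun k _ => ?_)
    · split <;> positivity
    · split
      · exact hgood k (by assumption)
      · exact hlb k
  refine le_trans ?_ h2
  rw [Finset.prod_ite, Finset.prod_const, Finset.prod_const]
  set c1 := ((Finset.range n).filter (fun k => K ≤ k)).card with hc1
  set c2 := ((Finset.range n).filter (fun k => ¬ K ≤ k)).card with hc2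
  have hsum : c1 + c2 = n := by
    rw [hc1, hc2, Finset.card_filter_add_card_filter_not, Finset.card_range]
  have hc2K : c2 ≤ K := by
    have : (Finset.range n).filter (fun k => ¬ K ≤ k) ⊆ Finset.range K := by
      intro k hk
      simp only [Finset.mem_filter, Finset.mem_range, not_le] at hk ⊢
      exact hk.2
    exact le_trans (Finset.card_le_card this) (le_of_eq (Finset.card_range K))
  have h3 : (1/2:ℝ)^K ≤ (1/2:ℝ)^c2 := by
    apply pow_le_pow_of_le_one (by norm_num) (by norm_num) hc2K
  have h4 : t^(n-K) ≤ t^c1 := by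
    apply pow_le_pow_right₀ ht
    omega
  calc (1/2:ℝ)^K * t^(n-K) ≤ (1/2:ℝ)^c2 * t^c1 := by
        apply mul_le_mul h3 h4 (by positivity) (by positivity)
    _ = t^c1 * (1/2:ℝ)^c2 := mul_comm _ _

private lemma prod_bound_upper {s C : ℝ} (hs : 1 ≤ s) (hC : 1 ≤ C) {v : ℕ → ℝ}
    (hub : ∀ k, v k ≤ C) (hnn : ∀ k, 0 ≤ v k) {K n : ℕ}
    (hgood : ∀ k, k + K < n → v k ≤ s) :
    ∏ k ∈ Finset.range n, v k ≤ s^n * C^K := by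
  have h2 : ∏ k ∈ Finset.range n, v k ≤
      ∏ k ∈ Finset.range n, (if k + K < n then s else C) := by
    refine Finset.prod_le_prod (fun k _ => hnn k) (fun k _ => ?_)
    split
    · exact hgood k (by assumption)
    · exact hub k
  refine h2.trans ?_
  rw [Finset.prod_ite, Finset.prod_const, Finset.prod_const]
  have hc1n : ((Finset.range n).filter (fun k => k + K < n)).card ≤ n := by
    calc ((Finset.range n).filter (fun k => k + K < n)).card
        ≤ (Finset.range n).card := Finset.card_le_card (Finset.filter_subset _ _)
      _ = n := Finset.card_range n
  have hc2K : ((Finset.range n).filter (fun k => ¬ k + K < n)).card ≤ K := by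
    have hsub : (Finset.range n).filter (fun k => ¬ k + K < n) ⊆ Finset.Ico (n - K) n := by
      intro k hk
      simp only [Finset.mem_filter, Finset.mem_range, not_lt, Finset.mem_Ico] at hk ⊢
      omega
    have := Finset.card_le_card hsub
    rw [Nat.card_Ico] at this
    omega
  exact mul_le_mul (pow_le_pow_right₀ hs hc1n) (pow_le_pow_right₀ hC hc2K)
    (by positivity) (by positivity)

set_option maxHeartbeats 1000000 in
set_option synthInstance.maxHeartbeats 400000 in
theorem stmt_11 (p : ℝ≥0∞) [Fact (1 ≤ p)] (hp : p ≠ ∞)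
    (g : ℝ) (hg : g < 0) (s t : ℝ) (hs : 1 < s) (hst : s < t)
    (w : ℝ → ℝ)
    (hw : ∀ x : ℝ, w x = if 1 ≤ x then t else if x ≤ -1 then s else -x / 2 + 1)
    (T : Lp ℂ p (volume : Measure ℝ) →L[ℂ] Lp ℂ p (volume : Measure ℝ))
    (hT : ∀ f : Lp ℂ p (volume : Measure ℝ),
      (T f : ℝ → ℂ) =ᵐ[volume] fun x => (w x : ℂ) * f (x - g)) :
    ∃ f : Lp ℂ p (volume : Measure ℝ),
      Dense (convexHull ℝ (Set.range fun n : ℕ => (T ^ n) f)) := by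
  haveI : Fact (p ≠ ∞) := ⟨hp⟩
  have ht1 : 1 < t := hs.trans hst
  have w_pos : ∀ x, 0 < w x := by
    intro x; rw [hw x]; split
    · linarith
    · split
      · linarith
      · rename_i h1 h2; push_neg at h1 h2; linarith
  have w_lb : ∀ x, (1:ℝ)/2 ≤ w x := by
    intro x; rw [hw x]; split
    · linarith
    · split
      · linarith
      · rename_i h1 h2; push_neg at h1 h2; linarith
  have w_ub : ∀ x, w x ≤ max t 2 := by
    intro x; rw [hw x]; split
    · exact le_max_left _ _
    · split
      · exact le_trans hst.le (le_max_left _ _)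
      · rename_i h1 h2; push_neg at h1 h2
        refine le_trans ?_ (le_max_right _ _); linarith
  have w_right : ∀ x : ℝ, 1 ≤ x → w x = t := fun x hx => by rw [hw x, if_pos hx]
  have w_left : ∀ x : ℝ, x ≤ -1 → w x = s := by
    intro x hx; rw [hw x, if_neg (by linarith), if_pos hx]
  have w_meas : Measurable w := by
    have hrw : w = fun x => if 1 ≤ x then t else if x ≤ -1 then s else -x / 2 + 1 := funext hw
    rw [hrw]
    apply Measurable.ite (measurableSet_le measurable_const measurable_id) measurable_const
    apply Measurable.ite (measurableSet_le measurable_id measurable_const) measurable_const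
    exact (measurable_neg.div_const 2).add_const 1
  set a : ℝ := -g with ha'
  have ha : 0 < a := by simp only [ha']; linarith
  set W : ℕ → ℝ → ℝ := fun n x => ∏ k ∈ Finset.range n, w (x + k * a) with hWdef
  have W_pos : ∀ n x, 0 < W n x := by
    intro n x
    exact Finset.prod_pos fun k _ => w_pos _
  have W_meas : ∀ n, Measurable (W n) := by
    intro n
    exact Finset.measurable_prod _ fun k _ => w_meas.comp (measurable_add_const _)
  have hTn : ∀ (n : ℕ) (f : Lp ℂ p volume),
      (((T^n) f : Lp ℂ p volume) : ℝ → ℂ) =ᵐ[volume] fun x => (W n x : ℂ) * f (x + n * a) := by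
    intro n
    induction n with
    | zero =>
      intro f
      simp only [pow_zero, ContinuousLinearMap.one_apply, hWdef, Finset.range_zero,
        Finset.prod_empty, Nat.cast_zero, zero_mul, add_zero, Complex.ofReal_one, one_mul]
      exact Filter.EventuallyEq.rfl
    | succ n ih =>
      intro f
      have h1 : (T^(n+1)) f = T ((T^n) f) := by
        rw [pow_succ']; rfl
      have h2 := hT ((T^n) f)
      have h3 : (fun x => ((T^n) f : ℝ → ℂ) (x - g)) =ᵐ[volume]
          (fun x => (W n (x - g) : ℂ) * f (x - g + n * a)) := by
        have hmp : MeasurePreserving (fun x : ℝ => x - g) volume volume :=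
          measurePreserving_sub_right volume g
        have := MeasureTheory.ae_eq_comp (μ := volume) (f := fun x : ℝ => x - g)
          hmp.aemeasurable (g := fun y => ((T^n) f : ℝ → ℂ) y)
          (g' := fun y => (W n y : ℂ) * f (y + n * a)) (by rw [hmp.map_eq]; exact ih f)
        exact this
      rw [h1]
      refine (h2.trans ?_)
      have h4 : (fun x => (w x : ℂ) * ((T^n) f : ℝ → ℂ) (x - g)) =ᵐ[volume]
          (fun x => (w x : ℂ) * ((W n (x - g) : ℂ) * f (x - g + n * a))) := by
        exact h3.mono fun x hx => by simp only [hx]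
      refine h4.trans (Filter.EventuallyEq.of_eq (funext fun x => ?_))
      have harg : x - g + n * a = x + (n + 1 : ℕ) * a := by
        simp only [ha']; push_cast; ring
      have hWid : W (n+1) x = W n (x - g) * w x := by
        simp only [hWdef, Finset.prod_range_succ']
        congr 1
        · apply Finset.prod_congr rfl
          intro k _
          congr 1
          simp only [ha']; push_cast; ring
        · simp
      rw [harg, hWid]
      push_cast
      ring
  have comp_ae : ∀ (c : ℝ) (F G : ℝ → ℂ), F =ᵐ[volume] G →
      (fun x : ℝ => F (x + c)) =ᵐ[volume] (fun x : ℝ => G (x + c)) := by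
    intro c F G hFG
    have hmp : MeasurePreserving (fun x : ℝ => x + c) volume volume :=
      measurePreserving_add_right volume c
    exact MeasureTheory.ae_eq_comp hmp.aemeasurable (by rwa [hmp.map_eq])
  have normReal : ∀ r : ℝ, 0 < r → ‖((r : ℝ) : ℂ)‖ = r := by
    intro r hr
    rw [Complex.norm_real, Real.norm_eq_abs, abs_of_pos hr]
  -- constants
  set C : ℝ := max t 2 with hC'
  have hC1 : (1:ℝ) ≤ C := le_trans (by norm_num) (le_max_right _ _)
  set ρ : ℝ := (s + t)/2 with hρ'
  have hρ1 : 1 < ρ := by rw [hρ']; linarith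
  have hsρ : s < ρ := by rw [hρ']; linarith
  have hρt : ρ < t := by rw [hρ']; linarith
  have hρ0 : (0:ℝ) < ρ := by linarith
  set lam : ℕ → ℝ := fun n => (ρ⁻¹)^n with hlam'
  have lam_pos : ∀ n, 0 < lam n := fun n => by positivity
  have lam_le1 : ∀ n, lam n ≤ 1 := by
    intro n
    apply pow_le_one₀ (by positivity)
    rw [inv_eq_one_div]
    exact ((div_le_one hρ0).mpr hρ1.le)
  have hinvρ : ρ⁻¹ < 1 := by
    rw [inv_eq_one_div]; exact (div_lt_one hρ0).mpr hρ1
  have lam_to0 : Tendsto lam atTop (nhds 0) :=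
    tendsto_pow_atTop_nhds_zero_of_lt_one (by positivity) hinvρ
  -- the key transitivity property
  have key : ∀ U V : Set (Lp ℂ p volume), IsOpen U → U.Nonempty → IsOpen V → V.Nonempty →
      ∃ (f : Lp ℂ p volume) (n : ℕ) (l : ℝ), 0 ≤ l ∧ l ≤ 1 ∧ f ∈ U ∧
        (1 - l) • f + l • ((T^n) f) ∈ V := by
    intro U V hU hUne hV hVne
    obtain ⟨u0, hu0⟩ := hUne
    obtain ⟨v0, hv0⟩ := hVne
    obtain ⟨εu, hεu, hballU⟩ := Metric.isOpen_iff.1 hU u0 hu0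
    obtain ⟨εv, hεv, hballV⟩ := Metric.isOpen_iff.1 hV v0 hv0
    obtain ⟨uf, ucs, hua, ucont, umem⟩ :=
      (Lp.memLp u0).exists_hasCompactSupport_eLpNorm_sub_le hp
        (ε := ENNReal.ofReal (εu/3)) (ENNReal.ofReal_pos.mpr (by positivity)).ne'
    obtain ⟨vf, vcs, hva, vcont, vmem⟩ :=
      (Lp.memLp v0).exists_hasCompactSupport_eLpNorm_sub_le hp
        (ε := ENNReal.ofReal (εv/3)) (ENNReal.ofReal_pos.mpr (by positivity)).ne'
    obtain ⟨Mu, hMu⟩ := ucs.isBounded.subset_closedBall 0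
    obtain ⟨Mv, hMv⟩ := vcs.isBounded.subset_closedBall 0
    set M : ℝ := max (max Mu Mv) 0 with hM'
    have hM0 : (0:ℝ) ≤ M := le_max_right _ _
    have huf0 : ∀ y : ℝ, M < |y| → uf y = 0 := by
      intro y hy
      apply image_eq_zero_of_notMem_tsupport
      intro hmem
      have h1 := hMu hmem
      rw [Metric.mem_closedBall, Real.dist_eq, sub_zero] at h1
      have h2 : |y| ≤ M := h1.trans (le_trans (le_max_left _ _) (le_max_left _ _))
      linarith
    have hvf0 : ∀ y : ℝ, M < |y| → vf y = 0 := by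
      intro y hy
      apply image_eq_zero_of_notMem_tsupport
      intro hmem
      have h1 := hMv hmem
      rw [Metric.mem_closedBall, Real.dist_eq, sub_zero] at h1
      have h2 : |y| ≤ M := h1.trans (le_trans (le_max_right _ _) (le_max_left _ _))
      linarith
    set z : ℝ → ℂ := vf - uf with hz'
    have zmem : MemLp z p volume := vmem.sub umem
    have zcont : Continuous z := vcont.sub ucont
    have hz0 : ∀ y : ℝ, M < |y| → z y = 0 := by
      intro y hy
      simp only [hz', Pi.sub_apply, huf0 y hy, hvf0 y hy, sub_zero]
    set K : ℕ := ⌈(M+1)/a⌉₊ with hK'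
    have hKa : M + 1 ≤ (K:ℝ) * a := by
      have h1 : (M+1)/a ≤ (K:ℝ) := Nat.le_ceil _
      calc M + 1 = ((M+1)/a) * a := by field_simp
        _ ≤ (K:ℝ) * a := mul_le_mul_of_nonneg_right h1 ha.le
    set uLp : Lp ℂ p volume := umem.toLp uf with huLp'
    set vLp : Lp ℂ p volume := vmem.toLp vf with hvLp'
    set zLp : Lp ℂ p volume := zmem.toLp z with hzLp'
    have hz_sub : zLp = vLp - uLp := MemLp.toLp_sub vmem umem
    have hdu : ‖u0 - uLp‖ ≤ εu/3 := by
      rw [Lp.norm_def]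
      have hae : ((u0 - uLp : Lp ℂ p volume) : ℝ → ℂ) =ᵐ[volume] ((u0 : ℝ → ℂ) - uf) := by
        filter_upwards [Lp.coeFn_sub u0 uLp, umem.coeFn_toLp] with x h1 h2
        rw [h1]
        simp only [Pi.sub_apply, huLp', h2]
      rw [eLpNorm_congr_ae hae]
      calc (eLpNorm ((u0 : ℝ → ℂ) - uf) p volume).toReal
          ≤ (ENNReal.ofReal (εu/3)).toReal := ENNReal.toReal_mono (by simp) hua
        _ = εu/3 := ENNReal.toReal_ofReal (by positivity)
    have hdv : ‖v0 - vLp‖ ≤ εv/3 := by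
      rw [Lp.norm_def]
      have hae : ((v0 - vLp : Lp ℂ p volume) : ℝ → ℂ) =ᵐ[volume] ((v0 : ℝ → ℂ) - vf) := by
        filter_upwards [Lp.coeFn_sub v0 vLp, vmem.coeFn_toLp] with x h1 h2
        rw [h1]
        simp only [Pi.sub_apply, hvLp', h2]
      rw [eLpNorm_congr_ae hae]
      calc (eLpNorm ((v0 : ℝ → ℂ) - vf) p volume).toReal
          ≤ (ENNReal.ofReal (εv/3)).toReal := ENNReal.toReal_mono (by simp) hva
        _ = εv/3 := ENNReal.toReal_ofReal (by positivity)
    -- lower and upper bounds for the weight products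
    have hWlow : ∀ (n : ℕ) (x : ℝ), |x| ≤ M → ((1:ℝ)/2)^K * t^(n-K) ≤ W n x := by
      intro n x hx
      refine prod_bound_lower ht1.le (fun k => w_lb _) (fun k hk => ?_) n
      have h1 : (K:ℝ) * a ≤ (k:ℝ) * a :=
        mul_le_mul_of_nonneg_right (by exact_mod_cast hk) ha.le
      have h2 : -M ≤ x := (abs_le.1 hx).1
      have h3 : (1:ℝ) ≤ x + k*a := by linarith [hKa]
      rw [w_right _ h3]
    have hWhigh : ∀ (n : ℕ) (x : ℝ), |x + n*a| ≤ M → W n x ≤ s^n * C^K := by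
      intro n x hx
      refine prod_bound_upper hs.le hC1 (fun k => w_ub _) (fun k => (w_pos _).le)
        (fun k hkn => ?_)
      have h1 : x + n*a ≤ M := (abs_le.1 hx).2
      have h2 : (k:ℝ) + K + 1 ≤ (n:ℝ) := by exact_mod_cast hkn
      have h3 : (0:ℝ) ≤ ((n:ℝ) - k - K - 1) * a :=
        mul_nonneg (by linarith) ha.le
      have h4 : x + k*a ≤ -1 := by nlinarith [hKa, ha]
      rw [w_left _ h4]
    -- the auxiliary functions h_n
    set hfn : ℕ → ℝ → ℂ :=
      fun n y => (((lam n * W n (y - n*a) : ℝ)) : ℂ)⁻¹ * z (y - n*a) with hhfn'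
    have hn_meas : ∀ n, AEStronglyMeasurable (hfn n) volume := by
      intro n
      apply Measurable.aestronglyMeasurable
      apply Measurable.mul
      · apply Measurable.inv
        apply Complex.measurable_ofReal.comp
        exact measurable_const.mul ((W_meas n).comp (measurable_sub_const _))
      · exact zcont.measurable.comp (measurable_sub_const _)
    set Bn : ℕ → ℝ := fun n => (lam n * (((1:ℝ)/2)^K * t^(n-K)))⁻¹ with hBn'
    have hBn_pos : ∀ n, 0 < Bn n := by
      intro n
      have := lam_pos n
      have h1 : (0:ℝ) < t := by linarith
      positivity
    have hfn_bd : ∀ n y, ‖hfn n y‖ ≤ Bn n * ‖z (y - n*a)‖ := by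
      intro n y
      by_cases h0 : z (y - n*a) = 0
      · simp only [hhfn', h0, mul_zero, norm_zero]
        positivity
      · have hy : |y - n*a| ≤ M := by
          by_contra hcon
          push_neg at hcon
          exact h0 (hz0 _ hcon)
        have hWl := hWlow n (y - n*a) hy
        have hpos : 0 < lam n * W n (y - n*a) := mul_pos (lam_pos n) (W_pos _ _)
        have hByPos : (0:ℝ) < ((1:ℝ)/2)^K * t^(n-K) := by
          have h1 : (0:ℝ) < t := by linarith
          positivity
        simp only [hhfn']
        rw [norm_mul, norm_inv, normReal _ hpos]
        apply mul_le_mul_of_nonneg_right _ (norm_nonneg _)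
        simp only [hBn']
        gcongr
    have zshift_mem : ∀ n : ℕ, MemLp (fun y : ℝ => z (y - n*a)) p volume := by
      intro n
      have hmp : MeasurePreserving (fun y : ℝ => y - ((n:ℝ)*a)) volume volume :=
        measurePreserving_sub_right volume _
      exact MemLp.comp_of_map (by rwa [hmp.map_eq]) hmp.aemeasurable
    have hfn_mem : ∀ n, MemLp (hfn n) p volume := fun n =>
      MemLp.of_le_mul (zshift_mem n) (hn_meas n) (Filter.Eventually.of_forall (hfn_bd n))
    set hLp : ℕ → Lp ℂ p volume := fun n => (hfn_mem n).toLp (hfn n) with hhLp'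
    set Z : ℝ := (eLpNorm z p volume).toReal with hZ'
    have hZnn : 0 ≤ Z := ENNReal.toReal_nonneg
    have hzsn : ∀ n : ℕ, eLpNorm (fun y : ℝ => z (y - n*a)) p volume = eLpNorm z p volume := by
      intro n
      have hmp : MeasurePreserving (fun y : ℝ => y - ((n:ℝ)*a)) volume volume :=
        measurePreserving_sub_right volume _
      exact eLpNorm_comp_measurePreserving zcont.aestronglyMeasurable hmp
    have hnorm_h : ∀ n, ‖hLp n‖ ≤ Bn n * Z := by
      intro n
      have h1 : eLpNorm (hfn n) p volume
          ≤ ENNReal.ofReal (Bn n) * eLpNorm (fun y : ℝ => z (y - n*a)) p volume :=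
        eLpNorm_le_mul_eLpNorm_of_ae_le_mul (Filter.Eventually.of_forall (hfn_bd n)) p
      rw [hzsn n] at h1
      calc ‖hLp n‖ = (eLpNorm (hfn n) p volume).toReal := Lp.norm_toLp _ _
        _ ≤ (ENNReal.ofReal (Bn n) * eLpNorm z p volume).toReal :=
            ENNReal.toReal_mono (ENNReal.mul_ne_top ENNReal.ofReal_ne_top zmem.eLpNorm_ne_top) h1
        _ = Bn n * Z := by rw [ENNReal.toReal_mul, ENNReal.toReal_ofReal (hBn_pos n).le]
    -- the exact identity lam n • T^n (h n) = z
    have hTz : ∀ n : ℕ, lam n • ((T^n) (hLp n)) = zLp := by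
      intro n
      apply Lp.ext
      have e1 : ⇑(lam n • ((T^n) (hLp n))) =ᵐ[volume]
          (fun x : ℝ => ((lam n : ℝ) : ℂ) * (((T^n) (hLp n) : ℝ → ℂ) x)) := by
        filter_upwards [Lp.coeFn_smul (lam n) ((T^n) (hLp n))] with x hx
        rw [hx]
        simp [Complex.real_smul]
      have e2 : (fun x : ℝ => (⇑(hLp n)) (x + n*a)) =ᵐ[volume]
          (fun x : ℝ => hfn n (x + n*a)) := comp_ae _ _ _ ((hfn_mem n).coeFn_toLp)
      have e3 := hTn n (hLp n)
      have e4 : (fun x : ℝ => ((lam n : ℝ) : ℂ) * (((T^n) (hLp n) : ℝ → ℂ) x)) =ᵐ[volume] z := by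
        have e3' : (fun x : ℝ => ((lam n : ℝ) : ℂ) * (((T^n) (hLp n) : ℝ → ℂ) x)) =ᵐ[volume]
            (fun x : ℝ => ((lam n : ℝ) : ℂ) * ((W n x : ℂ) * hfn n (x + n*a))) := by
          filter_upwards [e3, e2] with x h3 h2'
          rw [h3, h2']
        refine e3'.trans (Filter.EventuallyEq.of_eq (funext fun x => ?_))
        simp only [hhfn', add_sub_cancel_right]
        have hpos : 0 < lam n * W n x := mul_pos (lam_pos n) (W_pos _ _)
        have hne : (((lam n * W n x : ℝ)) : ℂ) ≠ 0 := by
          exact_mod_cast hpos.ne'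
        push_cast at hne ⊢
        field_simp
        obtain ⟨hne1, hne2⟩ := mul_ne_zero_iff.1 hne
        calc _ = z x * (((lam n : ℝ) : ℂ) * (((lam n : ℝ) : ℂ))⁻¹) * (((W n x : ℝ) : ℂ) * (((W n x : ℝ) : ℂ))⁻¹) := by ring
          _ = z x := by rw [mul_inv_cancel₀ hne1, mul_inv_cancel₀ hne2]; ring
      exact e1.trans (e4.trans zmem.coeFn_toLp.symm)
    -- norm bound for T^n applied to u
    set UZ : ℝ := (eLpNorm uf p volume).toReal with hUZ'
    have hUZnn : 0 ≤ UZ := ENNReal.toReal_nonneg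
    have hnorm_Tu : ∀ n : ℕ, ‖(T^n) uLp‖ ≤ (s^n * C^K) * UZ := by
      intro n
      have e2 : (fun x : ℝ => (⇑uLp) (x + n*a)) =ᵐ[volume]
          (fun x : ℝ => uf (x + n*a)) := comp_ae _ _ _ umem.coeFn_toLp
      have e3 := hTn n uLp
      have e4 : ⇑((T^n) uLp) =ᵐ[volume] fun x : ℝ => (W n x : ℂ) * uf (x + n*a) := by
        filter_upwards [e3, e2] with x h3 h2'
        rw [h3, h2']
      have hbd : ∀ x : ℝ, ‖(W n x : ℂ) * uf (x + n*a)‖ ≤ (s^n * C^K) * ‖uf (x + n*a)‖ := by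
        intro x
        by_cases h0 : uf (x + n*a) = 0
        · simp [h0]
        · have hx : |x + n*a| ≤ M := by
            by_contra hcon
            push_neg at hcon
            exact h0 (huf0 _ hcon)
          rw [norm_mul, normReal _ (W_pos n x)]
          exact mul_le_mul_of_nonneg_right (hWhigh n x hx) (norm_nonneg _)
      have h1 : eLpNorm (fun x : ℝ => (W n x : ℂ) * uf (x + n*a)) p volume
          ≤ ENNReal.ofReal (s^n * C^K) * eLpNorm (fun x : ℝ => uf (x + n*a)) p volume :=
        eLpNorm_le_mul_eLpNorm_of_ae_le_mul (Filter.Eventually.of_forall hbd) p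
      have h2 : eLpNorm (fun x : ℝ => uf (x + n*a)) p volume = eLpNorm uf p volume := by
        have hmp : MeasurePreserving (fun x : ℝ => x + ((n:ℝ)*a)) volume volume :=
          measurePreserving_add_right volume _
        exact eLpNorm_comp_measurePreserving ucont.aestronglyMeasurable hmp
      rw [h2] at h1
      have hsCnn : (0:ℝ) ≤ s^n * C^K := by positivity
      calc ‖(T^n) uLp‖ = (eLpNorm (⇑((T^n) uLp)) p volume).toReal := Lp.norm_def _
        _ = (eLpNorm (fun x : ℝ => (W n x : ℂ) * uf (x + n*a)) p volume).toReal := by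
            rw [eLpNorm_congr_ae e4]
        _ ≤ (ENNReal.ofReal (s^n * C^K) * eLpNorm uf p volume).toReal :=
            ENNReal.toReal_mono (ENNReal.mul_ne_top ENNReal.ofReal_ne_top umem.eLpNorm_ne_top) h1
        _ = (s^n * C^K) * UZ := by rw [ENNReal.toReal_mul, ENNReal.toReal_ofReal hsCnn]
    -- limits
    have lim1 : Tendsto (fun n => lam n * ‖uLp‖) atTop (nhds 0) := by
      have h := lam_to0.mul_const ‖uLp‖
      rw [zero_mul] at h
      exact h
    have lim2 : Tendsto (fun n => Bn n * Z) atTop (nhds 0) := by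
      have hbase : (0:ℝ) ≤ ρ/t ∧ ρ/t < 1 := by
        constructor
        · positivity
        · rw [div_lt_one (by linarith)]; exact hρt
      have hlim : Tendsto (fun n : ℕ => (2^K * t^K * Z) * (ρ/t)^n) atTop (nhds 0) := by
        simpa using (tendsto_pow_atTop_nhds_zero_of_lt_one hbase.1 hbase.2).const_mul
          (2^K * t^K * Z)
      apply squeeze_zero' (Filter.Eventually.of_forall fun n => mul_nonneg (hBn_pos n).le hZnn) ?_ hlim
      filter_upwards [eventually_ge_atTop K] with n hn
      have ht0 : (0:ℝ) < t := by linarith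
      have hts : t^(n-K) = t^n / t^K := by
        rw [eq_div_iff (by positivity), ← pow_add]
        congr 1
        omega
      have hBeq : Bn n = (2^K * t^K) * (ρ/t)^n := by
        simp only [hBn', hlam']
        rw [hts]
        have hr1 : ρ ≠ 0 := hρ0.ne'
        have hr2 : t ≠ 0 := ht0.ne'
        field_simp
        calc (1:ℝ) = (ρ * ρ⁻¹)^n * (t * t⁻¹)^n * ((1/2)^K * 2^K) := by
              rw [mul_inv_cancel₀ hr1, mul_inv_cancel₀ hr2, ← mul_pow (1/2:ℝ) 2 K]; norm_num
          _ = _ := by ring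
      rw [hBeq]
      exact le_of_eq (by ring)
    have lim3 : Tendsto (fun n => lam n * ((s^n * C^K) * UZ)) atTop (nhds 0) := by
      have hbase : (0:ℝ) ≤ s/ρ ∧ s/ρ < 1 := by
        constructor
        · positivity
        · rw [div_lt_one hρ0]; exact hsρ
      have heq : ∀ n : ℕ, lam n * ((s^n * C^K) * UZ) = (C^K * UZ) * (s/ρ)^n := by
        intro n
        simp only [hlam']
        have hr1 : ρ ≠ 0 := hρ0.ne'
        field_simp
        ring
      have hlim : Tendsto (fun n : ℕ => (C^K * UZ) * (s/ρ)^n) atTop (nhds 0) := by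
        simpa using (tendsto_pow_atTop_nhds_zero_of_lt_one hbase.1 hbase.2).const_mul (C^K * UZ)
      exact hlim.congr (fun n => (heq n).symm)
    -- choose n large
    have limsum : Tendsto (fun n => (lam n * ‖uLp‖ + Bn n * Z + lam n * ((s^n * C^K) * UZ))
        + Bn n * Z) atTop (nhds 0) := by
      have := ((lim1.add lim2).add lim3).add lim2
      simpa using this
    have hev : ∀ᶠ n in atTop, (lam n * ‖uLp‖ + Bn n * Z + lam n * ((s^n * C^K) * UZ))
        + Bn n * Z < min (εu/3) (εv/3) := by
      have hmin : (0:ℝ) < min (εu/3) (εv/3) := by positivity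
      exact limsum.eventually (gt_mem_nhds hmin)
    obtain ⟨n, hn⟩ := hev.exists
    have hminu : min (εu/3) (εv/3) ≤ εu/3 := min_le_left _ _
    have hminv : min (εu/3) (εv/3) ≤ εv/3 := min_le_right _ _
    have nn1 : 0 ≤ lam n * ‖uLp‖ := mul_nonneg (lam_pos n).le (norm_nonneg _)
    have nn2 : 0 ≤ Bn n * Z := mul_nonneg (hBn_pos n).le hZnn
    have nn3 : 0 ≤ lam n * ((s^n * C^K) * UZ) :=
      mul_nonneg (lam_pos n).le (mul_nonneg (by positivity) hUZnn)
    set f : Lp ℂ p volume := uLp + hLp n with hf'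
    have hfU : f ∈ U := by
      apply hballU
      rw [Metric.mem_ball, dist_eq_norm]
      have hre : f - u0 = (uLp - u0) + hLp n := by rw [hf']; abel
      rw [hre]
      calc ‖(uLp - u0) + hLp n‖ ≤ ‖uLp - u0‖ + ‖hLp n‖ := norm_add_le _ _
        _ ≤ εu/3 + Bn n * Z := add_le_add (by rw [norm_sub_rev]; exact hdu) (hnorm_h n)
        _ < εu := by linarith
    have hexp : (1 - lam n) • f + lam n • ((T^n) f) - vLp
        = (-(lam n)) • uLp + (1 - lam n) • hLp n + lam n • ((T^n) uLp) := by
      rw [hf', map_add, smul_add (lam n) ((T^n) uLp) ((T^n) (hLp n)), hTz n, hz_sub]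
      module
    have herr : ‖(1 - lam n) • f + lam n • ((T^n) f) - vLp‖
        ≤ lam n * ‖uLp‖ + Bn n * Z + lam n * ((s^n * C^K) * UZ) := by
      rw [hexp]
      have e1 : ‖(-(lam n)) • uLp‖ = lam n * ‖uLp‖ := by
        rw [norm_smul, Real.norm_eq_abs, abs_neg, abs_of_pos (lam_pos n)]
      have e2 : ‖(1 - lam n) • hLp n‖ ≤ Bn n * Z := by
        rw [norm_smul, Real.norm_eq_abs, abs_of_nonneg (by linarith [lam_le1 n])]
        calc (1 - lam n) * ‖hLp n‖ ≤ 1 * ‖hLp n‖ :=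
              mul_le_mul_of_nonneg_right (by linarith [(lam_pos n)]) (norm_nonneg _)
          _ = ‖hLp n‖ := one_mul _
          _ ≤ Bn n * Z := hnorm_h n
      have e3 : ‖lam n • ((T^n) uLp)‖ ≤ lam n * ((s^n * C^K) * UZ) := by
        rw [norm_smul, Real.norm_eq_abs, abs_of_pos (lam_pos n)]
        exact mul_le_mul_of_nonneg_left (hnorm_Tu n) (lam_pos n).le
      calc ‖(-(lam n)) • uLp + (1 - lam n) • hLp n + lam n • ((T^n) uLp)‖
          ≤ ‖(-(lam n)) • uLp + (1 - lam n) • hLp n‖ + ‖lam n • ((T^n) uLp)‖ :=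
            norm_add_le _ _
        _ ≤ (‖(-(lam n)) • uLp‖ + ‖(1 - lam n) • hLp n‖) + ‖lam n • ((T^n) uLp)‖ := by
            linarith [norm_add_le ((-(lam n)) • uLp) ((1 - lam n) • hLp n)]
        _ ≤ lam n * ‖uLp‖ + Bn n * Z + lam n * ((s^n * C^K) * UZ) := by linarith
    refine ⟨f, n, lam n, (lam_pos n).le, lam_le1 n, hfU, ?_⟩
    apply hballV
    rw [Metric.mem_ball, dist_eq_norm]
    have h4 : (1 - lam n) • f + lam n • ((T^n) f) - v0
        = ((1 - lam n) • f + lam n • ((T^n) f) - vLp) + (vLp - v0) := by abel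
    rw [h4]
    have h5 := norm_add_le ((1 - lam n) • f + lam n • ((T^n) f) - vLp) (vLp - v0)
    have h6 : ‖vLp - v0‖ ≤ εv/3 := by rw [norm_sub_rev]; exact hdv
    linarith
  -- Baire category argument
  obtain ⟨b, bct, hbne, hbasis⟩ := TopologicalSpace.exists_countable_basis (Lp ℂ p (volume : Measure ℝ))
  set O : Set (Lp ℂ p (volume : Measure ℝ)) → Set (Lp ℂ p (volume : Measure ℝ)) := fun V =>
    {f | ∃ nl : ℕ × ℝ, 0 ≤ nl.2 ∧ nl.2 ≤ 1 ∧ (1 - nl.2) • f + nl.2 • ((T^nl.1) f) ∈ V} with hO'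
  have hOopen : ∀ V, IsOpen V → IsOpen (O V) := by
    intro V hV
    have hrw : O V = ⋃ (nl : ℕ × ℝ) (_ : 0 ≤ nl.2) (_ : nl.2 ≤ 1),
        (fun f => (1 - nl.2) • f + nl.2 • ((T^nl.1) f)) ⁻¹' V := by
      ext f
      simp only [hO', Set.mem_setOf_eq, Set.mem_iUnion, Set.mem_preimage]
      tauto
    rw [hrw]
    refine isOpen_iUnion fun nl => isOpen_iUnion fun _ => isOpen_iUnion fun _ => ?_
    apply hV.preimage
    fun_prop
  have hOdense : ∀ V, IsOpen V → V.Nonempty → Dense (O V) := by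
    intro V hV hVne
    rw [dense_iff_inter_open]
    intro U hU hUne
    obtain ⟨f, n, l, hl0, hl1, hfU, hfV⟩ := key U V hU hUne hV hVne
    exact ⟨f, hfU, ⟨(n, l), hl0, hl1, hfV⟩⟩
  have hGdense : Dense (⋂₀ ((fun V => O V) '' b)) := by
    apply dense_sInter_of_isOpen
    · rintro S ⟨V, hVb, rfl⟩
      exact hOopen V (hbasis.isOpen hVb)
    · exact bct.image _
    · rintro S ⟨V, hVb, rfl⟩
      refine hOdense V (hbasis.isOpen hVb) (Set.nonempty_iff_ne_empty.2 ?_)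
      rintro rfl
      exact hbne hVb
  obtain ⟨f, hf⟩ := hGdense.nonempty
  refine ⟨f, ?_⟩
  rw [dense_iff_inter_open]
  intro Uo hUo hUone
  obtain ⟨x, hx⟩ := hUone
  obtain ⟨V, hVb, hxV, hVU⟩ := hbasis.exists_subset_of_mem_open hx hUo
  have hfO : f ∈ O V := (Set.mem_sInter.1 hf) _ ⟨V, hVb, rfl⟩
  obtain ⟨⟨n, l⟩, hl0, hl1, hmem⟩ := hfO
  refine ⟨(1 - l) • f + l • ((T^n) f), hVU hmem, ?_⟩
  have h1 : f ∈ Set.range (fun k : ℕ => (T^k) f) := ⟨0, by simp⟩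
  have h2 : (T^n) f ∈ Set.range (fun k : ℕ => (T^k) f) := ⟨n, rfl⟩
  exact (convex_convexHull ℝ _) (subset_convexHull ℝ _ h1) (subset_convexHull ℝ _ h2)
    (by linarith) hl0 (by ring)
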